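/- Under the FOSD assumption, if v − f* is non-decreasing in outcomes (i.e., v_i − f*_i ≤ v_j − f*_j for i ≤ j) and γ has strictly increasing nonnegative coordinates, then u(f*) − u(f* + γ) ≤ ‖γ‖_∞, where u(f) = Σ_o p(o|a*(f))·(v_o − f_o). -/
import Mathlib


open Finset

private lemma abel_id (m : ℕ) (r g : ℕ → ℝ) :
    ∑ i ∈ Finset.range m, r i * g i
      = g 0 * (∑ j ∈ Finset.range m, r j)
        + ∑ k ∈ Finset.Ico 1 m, (g k - g (k-1)) * (∑ j ∈ Finset.Ico k m, r j) := by
  have tel : ∀ i : ℕ, ∑ k ∈ Finset.Ico 1 (i+1), (g k - g (k-1)) = g i - g 0 := by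
    intro i
    rw [Finset.sum_Ico_eq_sum_range]
    simp only [Nat.add_sub_cancel]
    have h : ∀ k ∈ Finset.range i, g (1 + k) - g (1 + k - 1) = g (k+1) - g k := by
      intro k _
      congr 2 <;> omega
    rw [Finset.sum_congr rfl h, Finset.sum_range_sub]
  have step1 : ∑ i ∈ Finset.range m, r i * g i
      = ∑ i ∈ Finset.range m, (r i * g 0 + ∑ k ∈ Finset.Ico 1 (i+1), (g k - g (k-1)) * r i) := by
    refine Finset.sum_congr rfl fun i _ => ?_
    rw [← Finset.sum_mul, tel i]; ring
  rw [step1, Finset.sum_add_distrib]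
  congr 1
  · rw [← Finset.sum_mul]; ring
  · rw [Finset.sum_comm' (t' := Finset.Ico 1 m) (s' := fun k => Finset.Ico k m)
      (by intro i k; simp only [Finset.mem_range, Finset.mem_Ico]; omega)]
    refine Finset.sum_congr rfl fun k _ => ?_
    rw [Finset.mul_sum]

private def fosd_ext {m : ℕ} (F : Fin m → ℝ) : ℕ → ℝ :=
  fun j => if h : j < m then F ⟨j, h⟩ else 0

private lemma fosd_sum_ext {m : ℕ} (F : Fin m → ℝ) :
    ∑ o, F o = ∑ j ∈ Finset.range m, fosd_ext F j := by
  rw [← Fin.sum_univ_eq_sum_range (fosd_ext F) m]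
  refine Finset.sum_congr rfl fun o _ => ?_
  simp [fosd_ext, o.isLt]

private lemma fosd_sum_ext_mul {m : ℕ} (F G : Fin m → ℝ) :
    ∑ o, F o * G o = ∑ j ∈ Finset.range m, fosd_ext F j * fosd_ext G j := by
  rw [fosd_sum_ext (fun o => F o * G o)]
  refine Finset.sum_congr rfl fun j hj => ?_
  have hjm := Finset.mem_range.1 hj
  simp [fosd_ext, hjm]

private lemma fosd_filter_sum_ext {m : ℕ} (F : Fin m → ℝ) (o : Fin m) :
    ∑ o' ∈ univ.filter (fun o' => o ≤ o'), F o' = ∑ j ∈ Finset.Ico o.val m, fosd_ext F j := by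
  rw [Finset.sum_filter, fosd_sum_ext (fun o' => if o ≤ o' then F o' else 0)]
  have hIco : Finset.Ico o.val m = (Finset.range m).filter (fun j => o.val ≤ j) := by
    ext j; simp only [Finset.mem_Ico, Finset.mem_filter, Finset.mem_range]; omega
  rw [hIco, Finset.sum_filter]
  refine Finset.sum_congr rfl fun j hj => ?_
  have hjm := Finset.mem_range.1 hj
  simp only [fosd_ext, dif_pos hjm]
  by_cases h : o.val ≤ j
  · rw [if_pos h, if_pos (Fin.le_def.2 h)]
  · rw [if_neg h, if_neg (fun hc => h (Fin.le_def.1 hc))]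

/-- If q' FOSD-dominates q, and still E_q[γ] ≤ E_{q'}[γ] with γ strictly increasing,
then all tail sums are equal (so q dominates q' too). -/
private lemma fosd_tail_flip (m : ℕ) (q q' γn : ℕ → ℝ)
    (hq1 : ∑ j ∈ Finset.range m, q j = 1) (hq1' : ∑ j ∈ Finset.range m, q' j = 1)
    (hT : ∀ k, k < m → ∑ j ∈ Finset.Ico k m, q' j ≤ ∑ j ∈ Finset.Ico k m, q j)
    (hγ : ∀ k, 1 ≤ k → k < m → γn (k-1) < γn k)
    (hE : ∑ j ∈ Finset.range m, q j * γn j ≤ ∑ j ∈ Finset.range m, q' j * γn j) :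
    ∀ k, k < m → ∑ j ∈ Finset.Ico k m, q j ≤ ∑ j ∈ Finset.Ico k m, q' j := by
  have hE' : 0 ≤ ∑ j ∈ Finset.range m, (q' j - q j) * γn j := by
    have h : ∑ j ∈ Finset.range m, (q' j - q j) * γn j
        = ∑ j ∈ Finset.range m, q' j * γn j - ∑ j ∈ Finset.range m, q j * γn j := by
      rw [← Finset.sum_sub_distrib]
      exact Finset.sum_congr rfl fun j _ => by ring
    rw [h]; linarith
  have hr0 : ∑ j ∈ Finset.range m, (q' j - q j) = 0 := by
    rw [Finset.sum_sub_distrib, hq1, hq1']; ring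
  have hid := abel_id m (fun j => q' j - q j) γn
  rw [hr0, mul_zero, zero_add] at hid
  have hterm : ∀ k ∈ Finset.Ico 1 m,
      (γn k - γn (k-1)) * (∑ j ∈ Finset.Ico k m, (q' j - q j)) ≤ 0 := by
    intro k hk
    rw [Finset.mem_Ico] at hk
    have h1 : 0 ≤ γn k - γn (k-1) := le_of_lt (sub_pos.2 (hγ k hk.1 hk.2))
    have h2 : ∑ j ∈ Finset.Ico k m, (q' j - q j) ≤ 0 := by
      rw [Finset.sum_sub_distrib]
      have := hT k hk.2
      linarith
    exact mul_nonpos_of_nonneg_of_nonpos h1 h2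
  have hsum0 : ∑ k ∈ Finset.Ico 1 m,
      (γn k - γn (k-1)) * (∑ j ∈ Finset.Ico k m, (q' j - q j)) = 0 := by
    have hle := Finset.sum_nonpos hterm
    rw [hid] at hE'
    linarith
  have hzero := (Finset.sum_eq_zero_iff_of_nonpos hterm).1 hsum0
  intro k hk
  rcases Nat.eq_zero_or_pos k with h0 | h1
  · subst h0
    rw [show Finset.Ico 0 m = Finset.range m by rw [Finset.range_eq_Ico], hq1, hq1']
  · have hz := hzero k (Finset.mem_Ico.2 ⟨h1, hk⟩)
    have hpos : 0 < γn k - γn (k-1) := sub_pos.2 (hγ k h1 hk)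
    have h3 : ∑ j ∈ Finset.Ico k m, (q' j - q j) = 0 := by
      rcases mul_eq_zero.1 hz with h | h
      · exact absurd h (ne_of_gt hpos)
      · exact h
    rw [Finset.sum_sub_distrib] at h3
    linarith

private lemma fosd_exp_mono (m : ℕ) (q q' g : ℕ → ℝ)
    (hq1 : ∑ j ∈ Finset.range m, q j = 1) (hq1' : ∑ j ∈ Finset.range m, q' j = 1)
    (hT : ∀ k, k < m → ∑ j ∈ Finset.Ico k m, q j ≤ ∑ j ∈ Finset.Ico k m, q' j)
    (hg : ∀ k, 1 ≤ k → k < m → g (k-1) ≤ g k) :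
    ∑ j ∈ Finset.range m, q j * g j ≤ ∑ j ∈ Finset.range m, q' j * g j := by
  have hr0 : ∑ j ∈ Finset.range m, (q' j - q j) = 0 := by
    rw [Finset.sum_sub_distrib, hq1, hq1']; ring
  have hid := abel_id m (fun j => q' j - q j) g
  rw [hr0, mul_zero, zero_add] at hid
  have hnn : 0 ≤ ∑ k ∈ Finset.Ico 1 m,
      (g k - g (k-1)) * (∑ j ∈ Finset.Ico k m, (q' j - q j)) := by
    refine Finset.sum_nonneg fun k hk => ?_
    rw [Finset.mem_Ico] at hk
    refine mul_nonneg (sub_nonneg.2 (hg k hk.1 hk.2)) ?_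
    rw [Finset.sum_sub_distrib]
    have := hT k hk.2
    linarith
  rw [← hid] at hnn
  have h : ∑ j ∈ Finset.range m, (q' j - q j) * g j
      = ∑ j ∈ Finset.range m, q' j * g j - ∑ j ∈ Finset.range m, q j * g j := by
    rw [← Finset.sum_sub_distrib]
    exact Finset.sum_congr rfl fun j _ => by ring
  rw [h] at hnn
  linarith

/-- Under the FOSD assumption, if v − f* is non-decreasing in outcomes and
γ has strictly increasing nonnegative coordinates, then u(f*) − u(f*+γ) ≤ ‖γ‖_∞,
where u(f) = ∑_o p(o|a*(f))·(v_o − f_o). -/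
theorem fosd_utility_continuity
    {m : ℕ} {A : Type*} [Nonempty A]
    (p : A → Fin m → ℝ) (c : A → ℝ) (astar : (Fin m → ℝ) → A)
    (hp : ∀ a o, 0 ≤ p a o) (hp1 : ∀ a, ∑ o, p a o = 1)
    (hbr : ∀ (f : Fin m → ℝ) (a : A),
      ∑ o, p a o * f o - c a ≤ ∑ o, p (astar f) o * f o - c (astar f))
    (hfosd : ∀ a a' : A, a ≠ a' →
      (∀ o : Fin m, ∑ o' ∈ univ.filter (fun o' => o ≤ o'), p a' o' ≤
          ∑ o' ∈ univ.filter (fun o' => o ≤ o'), p a o') ∨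
      (∀ o : Fin m, ∑ o' ∈ univ.filter (fun o' => o ≤ o'), p a o' ≤
          ∑ o' ∈ univ.filter (fun o' => o ≤ o'), p a' o'))
    (v : Fin m → ℝ) (hv : ∀ o, v o ∈ Set.Icc (0:ℝ) 1)
    (u : (Fin m → ℝ) → ℝ)
    (hu : ∀ f, u f = ∑ o, p (astar f) o * (v o - f o))
    (fstar γ : Fin m → ℝ)
    (hfstar : ∀ o, fstar o ∈ Set.Icc (0:ℝ) 1)
    (hmono : Monotone (fun o => v o - fstar o))
    (hγ0 : ∀ o, 0 ≤ γ o) (hγmono : StrictMono γ) :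
    u fstar - u (fstar + γ) ≤ ‖γ‖ := by
  classical
  set a := astar fstar with ha
  set a' := astar (fstar + γ) with ha'
  -- split sums over fstar + γ
  have split : ∀ b : A, ∑ o, p b o * (fstar + γ) o
      = ∑ o, p b o * fstar o + ∑ o, p b o * γ o := by
    intro b
    rw [← Finset.sum_add_distrib]
    refine Finset.sum_congr rfl fun o _ => ?_
    simp only [Pi.add_apply]; ring
  -- E_a[γ] ≤ E_{a'}[γ]
  have hEγ : ∑ o, p a o * γ o ≤ ∑ o, p a' o * γ o := by
    have e1 := hbr (fstar + γ) a
    have e2 := hbr fstar a'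
    rw [← ha'] at e1
    rw [← ha] at e2
    rw [split a, split a'] at e1
    linarith
  -- totals in ℕ-land
  have hq1 : ∀ b : A, ∑ j ∈ Finset.range m, fosd_ext (p b) j = 1 := by
    intro b; rw [← fosd_sum_ext]; exact hp1 b
  -- increments of γ extension
  have hγinc : ∀ k, 1 ≤ k → k < m → fosd_ext γ (k-1) < fosd_ext γ k := by
    intro k h1 h2
    have h3 : k - 1 < m := by omega
    simp only [fosd_ext, dif_pos h2, dif_pos h3]
    exact hγmono (by rw [Fin.lt_def]; simp; omega)
  -- FOSD dominance of a' over a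
  have hdom : ∀ k, k < m →
      ∑ j ∈ Finset.Ico k m, fosd_ext (p a) j ≤ ∑ j ∈ Finset.Ico k m, fosd_ext (p a') j := by
    intro k hk
    by_cases haa : a = a'
    · rw [haa]
    · have hEγ' : ∑ j ∈ Finset.range m, fosd_ext (p a) j * fosd_ext γ j
          ≤ ∑ j ∈ Finset.range m, fosd_ext (p a') j * fosd_ext γ j := by
        rw [← fosd_sum_ext_mul, ← fosd_sum_ext_mul]; exact hEγ
      rcases hfosd a a' haa with hcase | hcase
      · refine fosd_tail_flip m (fosd_ext (p a)) (fosd_ext (p a')) (fosd_ext γ)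
          (hq1 a) (hq1 a') ?_ hγinc hEγ' k hk
        intro j hj
        have := hcase ⟨j, hj⟩
        rwa [fosd_filter_sum_ext, fosd_filter_sum_ext] at this
      · have := hcase ⟨k, hk⟩
        rwa [fosd_filter_sum_ext, fosd_filter_sum_ext] at this
  -- monotone expectation
  have key1 : ∑ o, p a o * (v o - fstar o) ≤ ∑ o, p a' o * (v o - fstar o) := by
    rw [fosd_sum_ext_mul (p a) (fun o => v o - fstar o),
        fosd_sum_ext_mul (p a') (fun o => v o - fstar o)]
    refine fosd_exp_mono m _ _ _ (hq1 a) (hq1 a') hdom ?_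
    intro k h1 h2
    have h3 : k - 1 < m := by omega
    simp only [fosd_ext, dif_pos h2, dif_pos h3]
    exact hmono (by rw [Fin.le_def]; exact Nat.sub_le k 1)
  -- E_{a'}[γ] ≤ ‖γ‖
  have key2 : ∑ o, p a' o * γ o ≤ ‖γ‖ := by
    rcases Nat.eq_zero_or_pos m with hm | hm
    · subst hm
      simp [norm_nonneg]
    calc ∑ o, p a' o * γ o ≤ ∑ o : Fin m, p a' o * ‖γ‖ := by
          refine Finset.sum_le_sum fun o _ => ?_
          exact mul_le_mul_of_nonneg_left
            (le_trans (le_abs_self _) (norm_le_pi_norm γ o)) (hp a' o)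
      _ = ‖γ‖ := by rw [← Finset.sum_mul, hp1, one_mul]
  -- assemble
  rw [hu, hu, ← ha, ← ha']
  have usplit : ∑ o, p a' o * (v o - (fstar + γ) o)
      = ∑ o, p a' o * (v o - fstar o) - ∑ o, p a' o * γ o := by
    rw [← Finset.sum_sub_distrib]
    refine Finset.sum_congr rfl fun o _ => ?_
    simp only [Pi.add_apply]; ring
  rw [usplit]
  linarith
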